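/- Let d ≥ 1 and 1 ≤ k ≤ d be integers, let x ∈ ℝ^d, and let S ⊆ {1,…,d} be a top-k coordinate set for x, i.e. |S| = k and |x_i| ≥ |x_j| for every i ∈ S and j ∉ S. Then the squared Euclidean error of the top-k sparsifier satisfies ‖mask_S(x) − x‖² ≤ (1 − k/d)·‖x‖²; equivalently, Σ_{j ∉ S} x_j² ≤ (1 − k/d)·Σ_{j=1}^{d} x_j². -/

import Mathlib

/-- The masked vector `mask S x` has `j`-th coordinate `x j` if `j ∈ S` and `0` otherwise. -/
def mask {d : ℕ} (S : Finset (Fin d)) (x : EuclideanSpace ℝ (Fin d)) :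
    EuclideanSpace ℝ (Fin d) :=
  WithLp.toLp 2 (fun j => if j ∈ S then x j else 0)

/-- For a top-`k` coordinate set `S` of `x` (i.e. `|S| = k` and `|x i| ≥ |x j|` whenever
`i ∈ S`, `j ∉ S`), the top-`k` sparsification error satisfies
`‖mask_S(x) − x‖² ≤ (1 − k/d)·‖x‖²`. -/
theorem topk_error_le (d k : ℕ) (hd : 1 ≤ d) (hk1 : 1 ≤ k) (hkd : k ≤ d)
    (x : EuclideanSpace ℝ (Fin d)) (S : Finset (Fin d)) (hS : S.card = k)
    (htop : ∀ i ∈ S, ∀ j ∉ S, |x j| ≤ |x i|) :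
    ‖mask S x - x‖ ^ 2 ≤ (1 - (k : ℝ) / d) * ‖x‖ ^ 2 := by
  set A : ℝ := ∑ i ∈ S, x i ^ 2 with hA
  set B : ℝ := ∑ j ∈ Sᶜ, x j ^ 2 with hB
  have hA0 : 0 ≤ A := Finset.sum_nonneg fun i _ => sq_nonneg _
  have hB0 : 0 ≤ B := Finset.sum_nonneg fun i _ => sq_nonneg _
  have hcardc : (Sᶜ.card : ℝ) = (d : ℝ) - k := by
    have := Finset.card_compl S
    rw [this, Fintype.card_fin, hS]
    push_cast [Nat.cast_sub hkd]
    ring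
  -- key inequality : k * B ≤ (d - k) * A
  have hkey : (k : ℝ) * B ≤ ((d : ℝ) - k) * A := by
    have h1 : ∀ i ∈ S, B ≤ ((d : ℝ) - k) * x i ^ 2 := by
      intro i hi
      calc B ≤ ∑ _j ∈ Sᶜ, x i ^ 2 := by
              apply Finset.sum_le_sum
              intro j hj
              have := htop i hi j (Finset.mem_compl.mp hj)
              nlinarith [abs_nonneg (x j), abs_nonneg (x i), sq_abs (x j), sq_abs (x i)]
        _ = ((d : ℝ) - k) * x i ^ 2 := by
              rw [Finset.sum_const, nsmul_eq_mul, hcardc]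
    calc (k : ℝ) * B = ∑ _i ∈ S, B := by rw [Finset.sum_const, nsmul_eq_mul, hS]
      _ ≤ ∑ i ∈ S, ((d : ℝ) - k) * x i ^ 2 := Finset.sum_le_sum h1
      _ = ((d : ℝ) - k) * A := by rw [← Finset.mul_sum]
  have hnormx : ‖x‖ ^ 2 = A + B := by
    rw [EuclideanSpace.norm_eq, Real.sq_sqrt (Finset.sum_nonneg fun i _ => sq_nonneg _)]
    rw [← Finset.sum_add_sum_compl S]
    simp [Real.norm_eq_abs, sq_abs, hA, hB]
  have hnormm : ‖mask S x - x‖ ^ 2 = B := by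
    rw [EuclideanSpace.norm_eq, Real.sq_sqrt (Finset.sum_nonneg fun i _ => sq_nonneg _)]
    rw [← Finset.sum_add_sum_compl S]
    have hz : ∀ j ∈ S, ‖(mask S x - x) j‖ ^ 2 = 0 := by
      intro j hj
      simp [mask, PiLp.sub_apply, hj]
    have hz' : ∀ j ∈ Sᶜ, ‖(mask S x - x) j‖ ^ 2 = x j ^ 2 := by
      intro j hj
      have hj' := Finset.mem_compl.mp hj
      simp [mask, PiLp.sub_apply, hj', Real.norm_eq_abs, sq_abs]
    rw [Finset.sum_congr rfl hz, Finset.sum_congr rfl hz', Finset.sum_const_zero, zero_add]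
  rw [hnormx, hnormm]
  have hd0 : (0 : ℝ) < d := by positivity
  have hident : (1 - (k : ℝ) / d) * (d : ℝ) = (d : ℝ) - k := by field_simp
  rw [show (1 - (k : ℝ) / d) * (A + B) = ((1 - (k : ℝ) / d) * (d : ℝ)) * (A + B) / d by
    field_simp, hident]
  rw [le_div_iff₀ hd0]
  nlinarith
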